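/- Let σ > 0, R > 0, K > 0, and let φ : ℝ² → ℝ be of class C⁴ with all iterated derivatives of order up to 4 bounded by K. Let e¹ = (1,0), e² = (−1,0), e³ = (0,1), e⁴ = (0,−1). Then there exists a constant C > 0 (depending only on K, σ, R) such that for every x ∈ ℝ², every q ∈ ℝ² with |q| ≤ R, and every Δt ∈ (0,1]: |(1/4)·∑_{ℓ=1}^{4} φ(x + Δt·q + √(2Δt)·σ·e^ℓ) − φ(x) − Δt·((σ²/2)·Δφ(x) + q·∇φ(x))| ≤ C·(Δt)², where Δφ = ∂²φ/∂x₁² + ∂²φ/∂x₂² and ∇φ is the gradient of φ. -/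

import Mathlib

open Set

lemma lineDeriv_iter (f : ℝ × ℝ → ℝ) (hf : ContDiff ℝ 4 f) (y v : ℝ × ℝ) :
    ∀ k : ℕ, k ≤ 4 → ∀ t : ℝ, iteratedDeriv k (fun t => f (y + t • v)) t
      = iteratedFDeriv ℝ k f (y + t • v) (fun _ => v) := by
  intro k
  induction k with
  | zero => intro _ t; simp [iteratedDeriv_zero]
  | succ k IH =>
    intro hk t
    rw [iteratedDeriv_succ]
    have IH' : iteratedDeriv k (fun t => f (y + t • v)) =
        fun t => iteratedFDeriv ℝ k f (y + t • v) (fun _ => v) :=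
      funext (IH (by omega))
    rw [IH']
    have hc : HasDerivAt (fun t : ℝ => y + t • v) v t := by
      simpa using ((hasDerivAt_id t).smul_const v).const_add y
    have hF : HasFDerivAt (iteratedFDeriv ℝ k f)
        (fderiv ℝ (iteratedFDeriv ℝ k f) (y + t • v)) (y + t • v) := by
      have : Differentiable ℝ (iteratedFDeriv ℝ k f) :=
        hf.differentiable_iteratedFDeriv (by exact_mod_cast by omega : (k : WithTop ℕ∞) < 4)
      exact (this _).hasFDerivAt
    have hcomp : HasDerivAt (fun t : ℝ => iteratedFDeriv ℝ k f (y + t • v))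
        (fderiv ℝ (iteratedFDeriv ℝ k f) (y + t • v) v) t := hF.comp_hasDerivAt t hc
    have happ := ((ContinuousMultilinearMap.apply ℝ (fun _ : Fin k => ℝ × ℝ) ℝ
        (fun _ => v)).hasFDerivAt.comp_hasDerivAt t hcomp)
    have h2 : HasDerivAt (fun t : ℝ => iteratedFDeriv ℝ k f (y + t • v) (fun _ => v))
        ((fderiv ℝ (iteratedFDeriv ℝ k f) (y + t • v) v) (fun _ => v)) t := happ
    rw [h2.deriv, iteratedFDeriv_succ_apply_left]
    rfl

lemma taylor_bound (f : ℝ × ℝ → ℝ) (hf : ContDiff ℝ 4 f) (K : ℝ)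
    (hbd : ∀ k : ℕ, k ≤ 4 → ∀ x : ℝ × ℝ, ‖iteratedFDeriv ℝ k f x‖ ≤ K)
    (n : ℕ) (hn : n + 1 ≤ 4) (y v : ℝ × ℝ) :
    ‖f (y + v) - ∑ k ∈ Finset.range (n + 1),
        ((Nat.factorial k : ℝ)⁻¹) • iteratedFDeriv ℝ k f y (fun _ => v)‖
      ≤ K * ‖v‖ ^ (n + 1) / Nat.factorial n := by
  set g : ℝ → ℝ := fun t => f (y + t • v) with hg
  have hgc : ContDiff ℝ 4 g := by
    apply hf.comp
    exact contDiff_const.add (contDiff_id.smul contDiff_const)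
  -- within = global on Icc 0 1
  have hwithin : ∀ k : ℕ, k ≤ 4 → ∀ t ∈ Icc (0:ℝ) 1,
      iteratedDerivWithin k g (Icc 0 1) t = iteratedDeriv k g t := by
    intro k hk t ht
    rw [iteratedDerivWithin_eq_iteratedFDerivWithin, iteratedDeriv_eq_iteratedFDeriv]
    congr 1
    have h1 := (contDiff_iff_ftaylorSeries.mp hgc).hasFTaylorSeriesUpToOn (Icc (0:ℝ) 1)
    have h2 := h1.eq_iteratedFDerivWithin_of_uniqueDiffOn
      (by exact_mod_cast hk : (k : WithTop ℕ∞) ≤ 4) (uniqueDiffOn_Icc one_pos) ht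
    exact h2.symm
  have hline := lineDeriv_iter f hf y v
  -- bound on (n+1)-th derivative
  have hC : ∀ t ∈ Icc (0:ℝ) 1,
      ‖iteratedDerivWithin (n+1) g (Icc 0 1) t‖ ≤ K * ‖v‖ ^ (n+1) := by
    intro t ht
    rw [hwithin (n+1) hn t ht, hline (n+1) hn t]
    calc ‖iteratedFDeriv ℝ (n+1) f (y + t • v) (fun _ => v)‖
        ≤ ‖iteratedFDeriv ℝ (n+1) f (y + t • v)‖ * ∏ _i : Fin (n+1), ‖v‖ :=
          (iteratedFDeriv ℝ (n+1) f (y + t • v)).le_opNorm _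
      _ ≤ K * ‖v‖ ^ (n+1) := by
          rw [Finset.prod_const, Finset.card_univ, Fintype.card_fin]
          exact mul_le_mul_of_nonneg_right (hbd _ hn _) (by positivity)
  have hmain := taylor_mean_remainder_bound (f := g) (a := 0) (b := 1)
    (C := K * ‖v‖ ^ (n+1)) (x := 1) (n := n) zero_le_one
    ((hgc.of_le (by exact_mod_cast hn)).contDiffOn) (right_mem_Icc.mpr zero_le_one) hC
  have hval : g 1 = f (y + v) := by simp [hg]
  have htay : taylorWithinEval g n (Icc 0 1) 0 1
      = ∑ k ∈ Finset.range (n + 1), ((Nat.factorial k : ℝ)⁻¹) • iteratedFDeriv ℝ k f y (fun _ => v) := by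
    rw [taylor_within_apply]
    refine Finset.sum_congr rfl fun k hk => ?_
    have hk4 : k ≤ 4 := by simp at hk; omega
    rw [hwithin k hk4 0 (left_mem_Icc.mpr zero_le_one), hline k hk4 0]
    simp
  rw [hval, htay] at hmain
  simpa using hmain



/-- The four unit displacement vectors `e¹ = (1,0)`, `e² = (−1,0)`, `e³ = (0,1)`,
`e⁴ = (0,−1)` of the four-point semi-Lagrangian quadrature. -/
noncomputable def eVec : Fin 4 → ℝ × ℝ := ![(1, 0), (-1, 0), (0, 1), (0, -1)]

set_option maxHeartbeats 1000000 in
/-- Consistency estimate for the four-point quadrature approximating the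
diffusion–advection generator: for a `C⁴` function `φ` with derivatives of order up to 4
bounded by `K`, the four-point average of φ at the characteristic feet equals
`φ(x) + Δt((σ²/2)Δφ(x) + q·∇φ(x))` up to an error `C·(Δt)²`. -/
theorem stmt_8 (σ R K : ℝ) (hσ : 0 < σ) (hR : 0 < R) (hK : 0 < K)
    (φ : ℝ × ℝ → ℝ) (hφ : ContDiff ℝ 4 φ)
    (hbd : ∀ k : ℕ, k ≤ 4 → ∀ x : ℝ × ℝ, ‖iteratedFDeriv ℝ k φ x‖ ≤ K) :
    ∃ C > 0, ∀ (x q : ℝ × ℝ) (Δt : ℝ), ‖q‖ ≤ R → 0 < Δt → Δt ≤ 1 →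
      |(1 / 4) * ∑ ℓ : Fin 4, φ (x + Δt • q + (Real.sqrt (2 * Δt) * σ) • eVec ℓ)
          - φ x
          - Δt * ((σ ^ 2 / 2) *
                (iteratedFDeriv ℝ 2 φ x ![(1, 0), (1, 0)] +
                  iteratedFDeriv ℝ 2 φ x ![(0, 1), (0, 1)]) +
              fderiv ℝ φ x q)| ≤ C * Δt ^ 2 := by
  set a : ℝ × ℝ := (1, 0) with ha
  set b : ℝ × ℝ := (0, 1) with hb
  have hna : ‖a‖ = 1 := by simp [ha, Prod.norm_def]
  have hnb : ‖b‖ = 1 := by simp [hb, Prod.norm_def]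
  have hveca : (![a, a] : Fin 2 → ℝ × ℝ) = fun _ => a := by
    funext i; fin_cases i <;> rfl
  have hvecb : (![b, b] : Fin 2 → ℝ × ℝ) = fun _ => b := by
    funext i; fin_cases i <;> rfl
  refine ⟨2*K*σ^4/3 + K*R^2 + K*R*σ^2, by positivity, ?_⟩
  intro x q Δt hq hΔt hΔt1
  set s : ℝ := Real.sqrt (2 * Δt) * σ with hsdef
  have hs0 : 0 ≤ s := mul_nonneg (Real.sqrt_nonneg _) hσ.le
  have hs2 : s ^ 2 = 2 * Δt * σ ^ 2 := by
    rw [hsdef, mul_pow, Real.sq_sqrt (by linarith)]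
  set y : ℝ × ℝ := x + Δt • q with hy
  set h : ℝ × ℝ := Δt • q with hh
  have hnh : ‖h‖ ≤ Δt * R := by
    rw [hh, norm_smul, Real.norm_eq_abs, abs_of_pos hΔt]
    exact mul_le_mul_of_nonneg_left hq hΔt.le
  -- diagonal smul lemma
  have hdiag : ∀ (k : ℕ) (z : ℝ × ℝ) (c : ℝ) (u : ℝ × ℝ),
      iteratedFDeriv ℝ k φ z (fun _ => c • u)
        = c ^ k • iteratedFDeriv ℝ k φ z (fun _ => u) := by
    intro k z c u
    have := (iteratedFDeriv ℝ k φ z).map_smul_univ (fun _ => c) (fun _ => u)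
    simpa [Finset.prod_const] using this
  -- Taylor polynomial at y
  set P : ℝ × ℝ → ℝ := fun v => ∑ k ∈ Finset.range 4,
      ((Nat.factorial k : ℝ)⁻¹) • iteratedFDeriv ℝ k φ y (fun _ => v) with hP
  have hexpand : ∀ (c : ℝ) (u : ℝ × ℝ), P (c • u) =
      φ y + c * iteratedFDeriv ℝ 1 φ y (fun _ => u)
        + (c^2/2) * iteratedFDeriv ℝ 2 φ y (fun _ => u)
        + (c^3/6) * iteratedFDeriv ℝ 3 φ y (fun _ => u) := by
    intro c u
    simp only [hP]
    rw [Finset.sum_range_succ, Finset.sum_range_succ,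
      Finset.sum_range_succ, Finset.sum_range_one]
    rw [hdiag 0, hdiag 1, hdiag 2, hdiag 3]
    simp only [iteratedFDeriv_zero_apply, smul_eq_mul, Nat.factorial]
    push_cast
    ring
  -- eVec values
  have he0 : s • eVec 0 = s • a := by simp [eVec, ha]
  have he1 : s • eVec 1 = (-s) • a := by
    simp only [eVec, ha]
    norm_num [Prod.smul_def]
  have he2 : s • eVec 2 = s • b := by simp [eVec, hb]
  have he3 : s • eVec 3 = (-s) • b := by
    simp only [eVec, hb]
    norm_num [Prod.smul_def]
    exact ⟨Or.inr rfl, by simp [show (![(1, 0), (-1, 0), (0, 1), (0, -1)] : Fin 4 → ℝ × ℝ) 3 = (0, -1) from rfl]⟩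
  -- abbreviations
  set Ba := iteratedFDeriv ℝ 2 φ y (fun _ => a) with hBa
  set Bb := iteratedFDeriv ℝ 2 φ y (fun _ => b) with hBb
  set Ca := iteratedFDeriv ℝ 2 φ x (fun _ => a) with hCa
  set Cb := iteratedFDeriv ℝ 2 φ x (fun _ => b) with hCb
  -- remainders
  set r : Fin 4 → ℝ := fun ℓ => φ (y + s • eVec ℓ) - P (s • eVec ℓ) with hr
  have hrbd : ∀ ℓ : Fin 4, |r ℓ| ≤ K * s^4 / 6 := by
    intro ℓ
    have hnorm : ‖s • eVec ℓ‖ = s := by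
      rw [norm_smul, Real.norm_eq_abs, abs_of_nonneg hs0]
      have : ‖eVec ℓ‖ = 1 := by
        fin_cases ℓ <;> simp [eVec, Prod.norm_def]
      rw [this, mul_one]
    have := taylor_bound φ hφ K hbd 3 (by norm_num) y (s • eVec ℓ)
    rw [hnorm] at this
    simpa [hr, hP, Real.norm_eq_abs, Nat.factorial] using this
  -- sum of Taylor polynomials
  have hPsum : ∑ ℓ : Fin 4, P (s • eVec ℓ) = 4 * φ y + s^2 * (Ba + Bb) := by
    rw [Fin.sum_univ_four, he0, he1, he2, he3, hexpand, hexpand, hexpand, hexpand,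
      hBa, hBb]
    ring
  -- first order Taylor for φ y
  set ρ : ℝ := φ y - φ x - Δt * fderiv ℝ φ x q with hρ
  have hρbd : |ρ| ≤ K * (Δt * R)^2 := by
    have := taylor_bound φ hφ K hbd 1 (by norm_num) x h
    rw [show (1:ℕ)+1 = 2 from rfl] at this
    rw [Finset.sum_range_succ, Finset.sum_range_one] at this
    simp only [iteratedFDeriv_zero_apply, iteratedFDeriv_one_apply, Nat.factorial,
      smul_eq_mul] at this
    have harg : iteratedFDeriv ℝ 1 φ x (fun _ => h) = fderiv ℝ φ x h := by
      rw [iteratedFDeriv_one_apply]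
    have hfd : fderiv ℝ φ x h = Δt * fderiv ℝ φ x q := by
      rw [hh, (fderiv ℝ φ x).map_smul, smul_eq_mul]
    have h1 : |φ (x + h) - (φ x + fderiv ℝ φ x h)| ≤ K * ‖h‖^2 := by
      simpa [Real.norm_eq_abs, iteratedFDeriv_one_apply] using this
    rw [hfd] at h1
    have h2 : |ρ| ≤ K * ‖h‖^2 := by
      rw [hρ, hy]
      calc |φ (x + h) - φ x - Δt * (fderiv ℝ φ x) q| =
          |φ (x + h) - (φ x + Δt * (fderiv ℝ φ x) q)| := by ring_nf
        _ ≤ K * ‖h‖^2 := h1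
    calc |ρ| ≤ K * ‖h‖^2 := h2
      _ ≤ K * (Δt * R)^2 := by gcongr
  -- Lipschitz of second derivative
  have hlip : ‖iteratedFDeriv ℝ 2 φ y - iteratedFDeriv ℝ 2 φ x‖ ≤ K * ‖h‖ := by
    have hdiff : Differentiable ℝ (iteratedFDeriv ℝ 2 φ) :=
      hφ.differentiable_iteratedFDeriv (by norm_num)
    have := convex_univ.norm_image_sub_le_of_norm_fderiv_le
      (f := iteratedFDeriv ℝ 2 φ) (C := K)
      (fun z _ => (hdiff z)) ?_ (mem_univ x) (mem_univ y)
    · calc ‖iteratedFDeriv ℝ 2 φ y - iteratedFDeriv ℝ 2 φ x‖ ≤ K * ‖y - x‖ := this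
        _ = K * ‖h‖ := by rw [hy]; congr 1; congr 1; abel
    · intro z _
      rw [norm_fderiv_iteratedFDeriv]
      exact hbd 3 (by norm_num) z
  have hBd : ∀ u : ℝ × ℝ, ‖u‖ = 1 →
      |iteratedFDeriv ℝ 2 φ y (fun _ => u) - iteratedFDeriv ℝ 2 φ x (fun _ => u)|
        ≤ K * (Δt * R) := by
    intro u hu
    have heq : iteratedFDeriv ℝ 2 φ y (fun _ => u) - iteratedFDeriv ℝ 2 φ x (fun _ => u)
        = (iteratedFDeriv ℝ 2 φ y - iteratedFDeriv ℝ 2 φ x) (fun _ => u) := by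
      simp [ContinuousMultilinearMap.sub_apply]
    rw [heq, ← Real.norm_eq_abs]
    calc ‖(iteratedFDeriv ℝ 2 φ y - iteratedFDeriv ℝ 2 φ x) (fun _ : Fin 2 => u)‖
        ≤ ‖iteratedFDeriv ℝ 2 φ y - iteratedFDeriv ℝ 2 φ x‖ * ∏ _i : Fin 2, ‖u‖ :=
          ContinuousMultilinearMap.le_opNorm _ _
      _ ≤ K * ‖h‖ * 1 := by
          rw [hu]
          simp only [Finset.prod_const, one_pow]
          simpa using hlip
      _ ≤ K * (Δt * R) := by
          rw [mul_one]
          exact mul_le_mul_of_nonneg_left hnh hK.le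
  have hda := hBd a hna
  have hdb := hBd b hnb
  -- main identity
  have hCa' : iteratedFDeriv ℝ 2 φ x ![(1,0),(1,0)] = Ca := by
    rw [hCa, ← hveca]
  have hCb' : iteratedFDeriv ℝ 2 φ x ![(0,1),(0,1)] = Cb := by
    rw [hCb, ← hvecb]
  have hsumφ : ∑ ℓ : Fin 4, φ (x + Δt • q + s • eVec ℓ)
      = ∑ ℓ : Fin 4, (r ℓ + P (s • eVec ℓ)) := by
    refine Finset.sum_congr rfl fun ℓ _ => ?_
    simp only [hr, ← hy]
    ring
  have key : (1 / 4) * ∑ ℓ : Fin 4, φ (x + Δt • q + s • eVec ℓ)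
        - φ x - Δt * ((σ ^ 2 / 2) * (Ca + Cb) + fderiv ℝ φ x q)
      = (1/4) * ∑ ℓ : Fin 4, r ℓ + ρ + Δt * (σ^2/2) * ((Ba - Ca) + (Bb - Cb)) := by
    rw [hsumφ, Finset.sum_add_distrib, hPsum, hρ, hs2]
    ring
  rw [hCa', hCb', key]
  have hsum_r : |∑ ℓ : Fin 4, r ℓ| ≤ 4 * (K * s^4 / 6) := by
    calc |∑ ℓ : Fin 4, r ℓ| ≤ ∑ ℓ : Fin 4, |r ℓ| := Finset.abs_sum_le_sum_abs _ _
      _ ≤ ∑ _ℓ : Fin 4, (K * s^4/6) := Finset.sum_le_sum fun ℓ _ => hrbd ℓ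
      _ = 4 * (K * s^4 / 6) := by
          simp only [Finset.sum_const, Finset.card_univ, Fintype.card_fin, nsmul_eq_mul]
          push_cast; ring
  have hs4 : s^4 = 4 * Δt^2 * σ^4 := by
    have : s^4 = (s^2)^2 := by ring
    rw [this, hs2]; ring
  calc |(1/4) * ∑ ℓ : Fin 4, r ℓ + ρ + Δt * (σ^2/2) * ((Ba - Ca) + (Bb - Cb))|
      ≤ |(1/4) * ∑ ℓ : Fin 4, r ℓ| + |ρ| + |Δt * (σ^2/2) * ((Ba - Ca) + (Bb - Cb))| := by
        exact (abs_add_le _ _).trans (by gcongr; exact abs_add_le _ _)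
    _ ≤ (1/4) * (4 * (K * s^4/6)) + K * (Δt * R)^2 + Δt * (σ^2/2) * (K*(Δt*R) + K*(Δt*R)) := by
        refine add_le_add (add_le_add ?_ hρbd) ?_
        · rw [abs_mul]
          have h14 : |(1:ℝ)/4| = 1/4 := by norm_num
          rw [h14]
          exact mul_le_mul_of_nonneg_left hsum_r (by norm_num)
        · rw [abs_mul, abs_mul]
          have h1 : |Δt| = Δt := abs_of_pos hΔt
          have h2 : |σ^2/2| = σ^2/2 := abs_of_pos (by positivity)
          rw [h1, h2]
          have h3 : |Ba - Ca + (Bb - Cb)| ≤ K*(Δt*R) + K*(Δt*R) :=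
            (abs_add_le _ _).trans (add_le_add hda hdb)
          have h4 : (0:ℝ) ≤ Δt * (σ^2/2) := by positivity
          exact mul_le_mul_of_nonneg_left h3 h4
    _ ≤ (2*K*σ^4/3 + K*R^2 + K*R*σ^2) * Δt^2 := by
        rw [hs4]
        have hΔt2 : Δt^2 ≤ Δt := by nlinarith
        nlinarith [sq_nonneg Δt, mul_pos hΔt hΔt, hK.le, hR.le, hσ.le,
          pow_nonneg hσ.le 4, mul_nonneg hK.le (pow_nonneg hσ.le 4)]
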